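/- Let E ≥ 1 be an integer, let t_0 ≤ t be integers with t − t_0 ≤ E − 1, and let η_{t_0} ≥ η_{t_0+1} ≥ … ≥ η_t > 0 be step sizes with η_{t_0} ≤ 2η_t. Let p_1,…,p_N ≥ 0 with Σ_i p_i = 1, fix w ∈ ℝ^d, and for each i = 1,…,N and j = t_0,…,t−1 let g^i_j be random vectors with E‖g^i_j‖² ≤ G². Define w^i_t = w − Σ_{j=t_0}^{t−1} η_j g^i_j and w̄_t = Σ_i p_i w^i_t. Then Σ_i p_i E‖w̄_t − w^i_t‖² ≤ 4 η_t² (E−1)² G². -/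

import Mathlib

open MeasureTheory

/-- Weighted variance inequality: the weighted average minimizes the weighted
sum of squared distances. -/
lemma weighted_var_le {E : Type*} [NormedAddCommGroup E] [InnerProductSpace ℝ E]
    {N : ℕ} (p : Fin N → ℝ) (hp : ∀ i, 0 ≤ p i) (hp1 : ∑ i, p i = 1)
    (x : Fin N → E) (c : E) :
    ∑ i, p i * ‖(∑ k, p k • x k) - x i‖ ^ 2 ≤ ∑ i, p i * ‖c - x i‖ ^ 2 := by
  set xb : E := ∑ k, p k • x k with hxb
  have hsum0 : ∑ i, p i • (xb - x i) = (0 : E) := by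
    simp only [smul_sub, Finset.sum_sub_distrib, ← Finset.sum_smul, hp1, one_smul]
    simp [hxb]
  have key : ∀ i : Fin N, ‖c - x i‖ ^ 2 =
      ‖c - xb‖ ^ 2 + 2 * (inner ℝ (c - xb) (xb - x i) : ℝ) + ‖xb - x i‖ ^ 2 := by
    intro i
    have h : c - x i = (c - xb) + (xb - x i) := by abel
    rw [h, @norm_add_sq_real]
  have hinner : ∑ i, p i * (inner ℝ (c - xb) (xb - x i) : ℝ) = 0 := by
    have : ∑ i, p i * (inner ℝ (c - xb) (xb - x i) : ℝ)
        = (inner ℝ (c - xb) (∑ i, p i • (xb - x i)) : ℝ) := by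
      rw [inner_sum]
      exact Finset.sum_congr rfl fun i _ => (real_inner_smul_right _ _ _).symm
    rw [this, hsum0, inner_zero_right]
  calc ∑ i, p i * ‖xb - x i‖ ^ 2
      ≤ ‖c - xb‖ ^ 2 + ∑ i, p i * ‖xb - x i‖ ^ 2 := le_add_of_nonneg_left (sq_nonneg _)
    _ = ∑ i, p i * ‖c - x i‖ ^ 2 := by
        have : ∑ i, p i * ‖c - x i‖ ^ 2
            = (∑ i, p i) * ‖c - xb‖ ^ 2
              + 2 * ∑ i, p i * (inner ℝ (c - xb) (xb - x i) : ℝ)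
              + ∑ i, p i * ‖xb - x i‖ ^ 2 := by
          rw [Finset.sum_mul, Finset.mul_sum, ← Finset.sum_add_distrib,
            ← Finset.sum_add_distrib]
          exact Finset.sum_congr rfl fun i _ => by rw [key i]; ring
        rw [this, hinner, hp1]; ring

/-- Bounding the divergence of local FedAvg iterates from their
weighted average: starting from a common point `w`, after at most `E − 1` local SGD
steps with nonincreasing step sizes `η_{t₀} ≥ … ≥ η_t > 0`, `η_{t₀} ≤ 2 η_t`, and
stochastic gradients with `E‖g^i_j‖² ≤ G²`, one has
`Σ_i p_i E‖w̄_t − w^i_t‖² ≤ 4 η_t² (E−1)² G²`. -/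
theorem local_iterate_divergence_bound
    {Ω : Type*} [MeasurableSpace Ω] (P : Measure Ω) [IsProbabilityMeasure P]
    (d N EE : ℕ) (hE : 1 ≤ EE) (t₀ t : ℕ) (ht : t₀ ≤ t) (htE : t - t₀ ≤ EE - 1)
    (η : ℕ → ℝ)
    (hη_pos : ∀ j, t₀ ≤ j → j ≤ t → 0 < η j)
    (hη_mono : ∀ j k, t₀ ≤ j → j ≤ k → k ≤ t → η k ≤ η j)
    (hη_ratio : η t₀ ≤ 2 * η t)
    (p : Fin N → ℝ) (hp : ∀ i, 0 ≤ p i) (hp1 : ∑ i, p i = 1)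
    (G : ℝ) (w : EuclideanSpace ℝ (Fin d))
    (g : Fin N → ℕ → Ω → EuclideanSpace ℝ (Fin d))
    (hg_meas : ∀ i, ∀ j ∈ Finset.Ico t₀ t, AEStronglyMeasurable (g i j) P)
    (hg_int : ∀ i, ∀ j ∈ Finset.Ico t₀ t, Integrable (fun ω => ‖g i j ω‖ ^ 2) P)
    (hg_bound : ∀ i, ∀ j ∈ Finset.Ico t₀ t, ∫ ω, ‖g i j ω‖ ^ 2 ∂P ≤ G ^ 2)
    (wi : Fin N → Ω → EuclideanSpace ℝ (Fin d))
    (hwi : ∀ i ω, wi i ω = w - ∑ j ∈ Finset.Ico t₀ t, η j • g i j ω)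
    (wbar : Ω → EuclideanSpace ℝ (Fin d))
    (hwbar : ∀ ω, wbar ω = ∑ i, p i • wi i ω) :
    ∑ i, p i * ∫ ω, ‖wbar ω - wi i ω‖ ^ 2 ∂P ≤
      4 * η t ^ 2 * ((EE : ℝ) - 1) ^ 2 * G ^ 2 := by
  classical
  set s : Finset ℕ := Finset.Ico t₀ t with hs
  have hη0_nonneg : 0 ≤ η t₀ := (hη_pos t₀ le_rfl ht).le
  have hηj : ∀ j ∈ s, 0 ≤ η j ∧ η j ≤ η t₀ := by
    intro j hj
    rw [hs, Finset.mem_Ico] at hj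
    exact ⟨(hη_pos j hj.1 hj.2.le).le, hη_mono t₀ j le_rfl hj.1 hj.2.le⟩
  -- Memℒp facts
  have hg_mem : ∀ i, ∀ j ∈ s, MemLp (g i j) 2 P := fun i j hj =>
    (memLp_two_iff_integrable_sq_norm (hg_meas i j hj)).mpr (hg_int i j hj)
  have hwi_mem : ∀ i, MemLp (wi i) 2 P := by
    intro i
    have : wi i = fun ω => w - ∑ j ∈ s, η j • g i j ω := funext fun ω => hwi i ω
    rw [this]
    have hsum : MemLp (fun ω => ∑ j ∈ s, η j • g i j ω) 2 P := by
      have h := memLp_finset_sum' s fun j hj => (hg_mem i j hj).const_smul (η j)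
      have heq : (∑ j ∈ s, η j • g i j) = fun ω => ∑ j ∈ s, η j • g i j ω := by
        ext ω; simp
      rwa [heq] at h
    exact (memLp_const w).sub hsum
  have hwbar_mem : MemLp wbar 2 P := by
    have : wbar = fun ω => ∑ i, p i • wi i ω := funext fun ω => hwbar ω
    rw [this]
    have h := memLp_finset_sum' Finset.univ fun i _ => (hwi_mem i).const_smul (p i)
    have heq : (∑ i, p i • wi i) = fun ω => ∑ i, p i • wi i ω := by
      ext ω; simp
    rwa [heq] at h
  have hh_int : ∀ i : Fin N, Integrable (fun ω => ‖wbar ω - wi i ω‖ ^ 2) P := by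
    intro i
    have hm : MemLp (fun ω => wbar ω - wi i ω) 2 P := hwbar_mem.sub (hwi_mem i)
    exact (memLp_two_iff_integrable_sq_norm hm.aestronglyMeasurable).mp hm
  have hF_int : ∀ i : Fin N, Integrable (fun ω => ‖w - wi i ω‖ ^ 2) P := by
    intro i
    have hm : MemLp (fun ω => w - wi i ω) 2 P := (memLp_const w).sub (hwi_mem i)
    exact (memLp_two_iff_integrable_sq_norm hm.aestronglyMeasurable).mp hm
  -- pointwise variance bound
  have hvar : ∀ ω, ∑ i, p i * ‖wbar ω - wi i ω‖ ^ 2 ≤ ∑ i, p i * ‖w - wi i ω‖ ^ 2 := by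
    intro ω
    have := weighted_var_le p hp hp1 (fun i => wi i ω) w
    simpa [← hwbar ω] using this
  -- bound on ∫ ‖w - wi i‖²
  have hn : (s.card : ℝ) ≤ (EE : ℝ) - 1 := by
    have : s.card = t - t₀ := Nat.card_Ico t₀ t
    rw [this]
    have h1 : ((t - t₀ : ℕ) : ℝ) ≤ ((EE - 1 : ℕ) : ℝ) := Nat.cast_le.mpr htE
    have h2 : ((EE - 1 : ℕ) : ℝ) = (EE : ℝ) - 1 := by
      push_cast [Nat.cast_sub hE]; ring
    linarith
  have hF_pt : ∀ i ω, ‖w - wi i ω‖ ^ 2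
      ≤ (s.card : ℝ) * η t₀ ^ 2 * ∑ j ∈ s, ‖g i j ω‖ ^ 2 := by
    intro i ω
    have hval : w - wi i ω = ∑ j ∈ s, η j • g i j ω := by rw [hwi i ω]; abel
    rw [hval]
    have h1 : ‖∑ j ∈ s, η j • g i j ω‖ ≤ ∑ j ∈ s, η t₀ * ‖g i j ω‖ := by
      refine (norm_sum_le _ _).trans (Finset.sum_le_sum fun j hj => ?_)
      rw [norm_smul, Real.norm_eq_abs, abs_of_nonneg (hηj j hj).1]
      exact mul_le_mul_of_nonneg_right (hηj j hj).2 (norm_nonneg _)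
    have h2 : ‖∑ j ∈ s, η j • g i j ω‖ ^ 2 ≤ (∑ j ∈ s, η t₀ * ‖g i j ω‖) ^ 2 :=
      pow_le_pow_left₀ (norm_nonneg _) h1 2
    refine h2.trans ?_
    have h3 : (∑ j ∈ s, η t₀ * ‖g i j ω‖) ^ 2
        = η t₀ ^ 2 * (∑ j ∈ s, ‖g i j ω‖) ^ 2 := by
      rw [← Finset.mul_sum, mul_pow]
    rw [h3]
    have h4 : (∑ j ∈ s, ‖g i j ω‖) ^ 2 ≤ (s.card : ℝ) * ∑ j ∈ s, ‖g i j ω‖ ^ 2 :=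
      sq_sum_le_card_mul_sum_sq
    calc η t₀ ^ 2 * (∑ j ∈ s, ‖g i j ω‖) ^ 2
        ≤ η t₀ ^ 2 * ((s.card : ℝ) * ∑ j ∈ s, ‖g i j ω‖ ^ 2) :=
          mul_le_mul_of_nonneg_left h4 (by positivity)
      _ = (s.card : ℝ) * η t₀ ^ 2 * ∑ j ∈ s, ‖g i j ω‖ ^ 2 := by ring
  have hF_bound : ∀ i : Fin N, ∫ ω, ‖w - wi i ω‖ ^ 2 ∂P
      ≤ (s.card : ℝ) ^ 2 * η t₀ ^ 2 * G ^ 2 := by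
    intro i
    have hint : Integrable (fun ω => (s.card : ℝ) * η t₀ ^ 2 * ∑ j ∈ s, ‖g i j ω‖ ^ 2) P :=
      ((integrable_finset_sum s fun j hj => hg_int i j hj).const_mul _)
    have h1 : ∫ ω, ‖w - wi i ω‖ ^ 2 ∂P
        ≤ ∫ ω, (s.card : ℝ) * η t₀ ^ 2 * ∑ j ∈ s, ‖g i j ω‖ ^ 2 ∂P :=
      integral_mono (hF_int i) hint (fun ω => hF_pt i ω)
    refine h1.trans ?_
    rw [integral_const_mul, integral_finset_sum s fun j hj => hg_int i j hj]
    have h2 : ∑ j ∈ s, ∫ ω, ‖g i j ω‖ ^ 2 ∂P ≤ (s.card : ℝ) * G ^ 2 := by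
      calc ∑ j ∈ s, ∫ ω, ‖g i j ω‖ ^ 2 ∂P ≤ ∑ j ∈ s, G ^ 2 :=
            Finset.sum_le_sum fun j hj => hg_bound i j hj
        _ = (s.card : ℝ) * G ^ 2 := by rw [Finset.sum_const, nsmul_eq_mul]
    calc (s.card : ℝ) * η t₀ ^ 2 * ∑ j ∈ s, ∫ ω, ‖g i j ω‖ ^ 2 ∂P
        ≤ (s.card : ℝ) * η t₀ ^ 2 * ((s.card : ℝ) * G ^ 2) :=
          mul_le_mul_of_nonneg_left h2 (by positivity)
      _ = (s.card : ℝ) ^ 2 * η t₀ ^ 2 * G ^ 2 := by ring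
  -- put everything together
  have step1 : ∑ i, p i * ∫ ω, ‖wbar ω - wi i ω‖ ^ 2 ∂P
      ≤ ∑ i, p i * ∫ ω, ‖w - wi i ω‖ ^ 2 ∂P := by
    have lhs : ∑ i, p i * ∫ ω, ‖wbar ω - wi i ω‖ ^ 2 ∂P
        = ∫ ω, ∑ i, p i * ‖wbar ω - wi i ω‖ ^ 2 ∂P := by
      rw [integral_finset_sum Finset.univ fun i _ => (hh_int i).const_mul (p i)]
      exact Finset.sum_congr rfl fun i _ => (integral_const_mul _ _).symm
    have rhs : ∑ i, p i * ∫ ω, ‖w - wi i ω‖ ^ 2 ∂P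
        = ∫ ω, ∑ i, p i * ‖w - wi i ω‖ ^ 2 ∂P := by
      rw [integral_finset_sum Finset.univ fun i _ => (hF_int i).const_mul (p i)]
      exact Finset.sum_congr rfl fun i _ => (integral_const_mul _ _).symm
    rw [lhs, rhs]
    exact integral_mono
      (integrable_finset_sum _ fun i _ => (hh_int i).const_mul (p i))
      (integrable_finset_sum _ fun i _ => (hF_int i).const_mul (p i))
      hvar
  have step2 : ∑ i, p i * ∫ ω, ‖w - wi i ω‖ ^ 2 ∂P
      ≤ (s.card : ℝ) ^ 2 * η t₀ ^ 2 * G ^ 2 := by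
    calc ∑ i, p i * ∫ ω, ‖w - wi i ω‖ ^ 2 ∂P
        ≤ ∑ i, p i * ((s.card : ℝ) ^ 2 * η t₀ ^ 2 * G ^ 2) :=
          Finset.sum_le_sum fun i _ =>
            mul_le_mul_of_nonneg_left (hF_bound i) (hp i)
      _ = (s.card : ℝ) ^ 2 * η t₀ ^ 2 * G ^ 2 := by
          rw [← Finset.sum_mul, hp1, one_mul]
  refine (step1.trans step2).trans ?_
  have hcard_nonneg : (0 : ℝ) ≤ (s.card : ℝ) := Nat.cast_nonneg _
  have hE1 : (0 : ℝ) ≤ (EE : ℝ) - 1 := by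
    have : (1 : ℝ) ≤ (EE : ℝ) := by exact_mod_cast hE
    linarith
  have key : (s.card : ℝ) ^ 2 * η t₀ ^ 2 ≤ ((EE : ℝ) - 1) ^ 2 * (2 * η t) ^ 2 := by
    have h1 : (s.card : ℝ) * η t₀ ≤ ((EE : ℝ) - 1) * (2 * η t) :=
      mul_le_mul hn hη_ratio hη0_nonneg hE1
    have h2 : ((s.card : ℝ) * η t₀) ^ 2 ≤ (((EE : ℝ) - 1) * (2 * η t)) ^ 2 :=
      pow_le_pow_left₀ (by positivity) h1 2
    calc (s.card : ℝ) ^ 2 * η t₀ ^ 2 = ((s.card : ℝ) * η t₀) ^ 2 := by ring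
      _ ≤ (((EE : ℝ) - 1) * (2 * η t)) ^ 2 := h2
      _ = ((EE : ℝ) - 1) ^ 2 * (2 * η t) ^ 2 := by ring
  calc (s.card : ℝ) ^ 2 * η t₀ ^ 2 * G ^ 2
      ≤ ((EE : ℝ) - 1) ^ 2 * (2 * η t) ^ 2 * G ^ 2 :=
        mul_le_mul_of_nonneg_right key (sq_nonneg G)
    _ = 4 * η t ^ 2 * ((EE : ℝ) - 1) ^ 2 * G ^ 2 := by ring
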